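/- For i ≥ 2 and 1 ≤ k ≤ i, the polynomial S_{i,k}(t) = Σ_{compositions (i_1,…,i_k) of i} p_{i_1,…,i_k}(t) satisfies S_{i,k}(i−2) = −|s(i−1, i−k)| and S_{i,k}(0) = (1−i) · s(i−1, i−k), where s(·,·) are Stirling numbers of the first kind. -/

import Mathlib

open Finset

/-- `p_{i_1,…,i_k}(t) = (t−i_1+1)(t−i_1−i_2+1)⋯(t−i+1)`. -/
noncomputable def pProd (l : List ℕ) (t : ℂ) : ℂ :=
  ∏ j ∈ Finset.range l.length, (t - ((l.take (j + 1)).sum : ℂ) + 1)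

/-- `S_{i,k}(t)`: sum of `p_{i_1,…,i_k}(t)` over compositions of `i` of length `k`. -/
noncomputable def Spoly (i k : ℕ) (t : ℂ) : ℂ :=
  ∑ c ∈ Finset.univ.filter (fun c : Composition i => c.length = k), pProd c.blocks t

/-- Signed Stirling numbers of the first kind. -/
def stirling1 : ℕ → ℕ → ℤ
  | 0, 0 => 1
  | 0, _ + 1 => 0
  | n + 1, 0 => -(n : ℤ) * stirling1 n 0
  | n + 1, m + 1 => stirling1 n m - (n : ℤ) * stirling1 n (m + 1)

/-- `Vfun n j t = e_j(t, t-1, ..., t-n+1)`. -/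
noncomputable def Vfun : ℕ → ℕ → ℂ → ℂ
  | 0, 0, _ => 1
  | 0, _+1, _ => 0
  | _+1, 0, _ => 1
  | n+1, j+1, t => Vfun n (j+1) t + (t - n) * Vfun n j t

lemma Vfun_succ (n j : ℕ) (t : ℂ) :
    Vfun (n+1) (j+1) t = Vfun n (j+1) t + (t - n) * Vfun n j t := rfl

lemma Vfun_zero_right (n : ℕ) (t : ℂ) : Vfun n 0 t = 1 := by cases n <;> rfl

lemma Vfun_eq_zero : ∀ n j, ∀ t : ℂ, n < j → Vfun n j t = 0 := by
  intro n
  induction n with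
  | zero => intro j t h; match j, h with | j+1, _ => rfl
  | succ n ih =>
    intro j t h
    match j, h with
    | j+1, h =>
      show Vfun n (j+1) t + (t - n) * Vfun n j t = 0
      rw [ih _ _ (by omega), ih _ _ (by omega)]
      ring

lemma Vfun_top : ∀ n j, ∀ t : ℂ, Vfun (n+1) (j+1) t = Vfun n (j+1) (t-1) + t * Vfun n j (t-1) := by
  intro n
  induction n with
  | zero =>
    intro j t
    match j with
    | 0 => rw [Vfun_succ]; simp [Vfun]
    | j+1 => rw [Vfun_succ]; simp [Vfun]
  | succ n ih =>
    intro j t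
    match j with
    | 0 =>
      rw [Vfun_succ, ih 0 t, Vfun_succ, Vfun_zero_right, Vfun_zero_right, Vfun_zero_right]
      push_cast
      ring
    | j+1 =>
      rw [Vfun_succ, ih (j+1) t, ih j t, Vfun_succ, Vfun_succ]
      push_cast
      ring

lemma stirling1_eq_zero : ∀ n m, n < m → stirling1 n m = 0 := by
  intro n
  induction n with
  | zero => intro m h; match m, h with | m+1, _ => rfl
  | succ n ih =>
    intro m h
    match m, h with
    | m+1, h =>
      show stirling1 n m - (n : ℤ) * stirling1 n (m+1) = 0
      rw [ih _ (by omega), ih _ (by omega)]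
      ring

lemma stirling1_self : ∀ n, stirling1 n n = 1 := by
  intro n
  induction n with
  | zero => rfl
  | succ n ih =>
    show stirling1 n n - (n : ℤ) * stirling1 n (n+1) = 1
    rw [ih, stirling1_eq_zero n (n+1) (by omega)]
    ring

lemma stirling1_sign : ∀ n m, 0 ≤ (-1 : ℤ)^(n+m) * stirling1 n m := by
  intro n
  induction n with
  | zero =>
    intro m
    match m with
    | 0 => norm_num [stirling1]
    | m+1 => show 0 ≤ _ * stirling1 0 (m+1); rw [stirling1_eq_zero 0 (m+1) (by omega)]; ring_nf; rfl
  | succ n ih =>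
    intro m
    match m with
    | 0 =>
      have h := ih 0
      show 0 ≤ (-1:ℤ)^(n+1+0) * (-(n:ℤ) * stirling1 n 0)
      have : (-1:ℤ)^(n+1+0) * (-(n:ℤ) * stirling1 n 0) = (n:ℤ) * ((-1)^(n+0) * stirling1 n 0) := by
        ring
      rw [this]
      positivity
    | m+1 =>
      have h1 := ih m
      have h2 := ih (m+1)
      show 0 ≤ (-1:ℤ)^(n+1+(m+1)) * (stirling1 n m - (n:ℤ) * stirling1 n (m+1))
      have : (-1:ℤ)^(n+1+(m+1)) * (stirling1 n m - (n:ℤ) * stirling1 n (m+1))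
          = (-1)^(n+m) * stirling1 n m + (n:ℤ) * ((-1)^(n+(m+1)) * stirling1 n (m+1)) := by
        have e1 : n+1+(m+1) = (n+m) + 2 := by omega
        have e2 : n+(m+1) = (n+m) + 1 := by omega
        rw [e1, e2, pow_add, pow_add]
        ring
      rw [this]
      positivity

lemma stirling1_natAbs (n m : ℕ) :
    ((stirling1 n m).natAbs : ℤ) = (-1 : ℤ)^(n+m) * stirling1 n m := by
  have h := stirling1_sign n m
  have : (stirling1 n m).natAbs = ((-1 : ℤ)^(n+m) * stirling1 n m).natAbs := by
    rw [Int.natAbs_mul, Int.natAbs_pow]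
    simp
  rw [this, Int.natAbs_of_nonneg h]

lemma VB : ∀ n, ∀ j ≤ n, Vfun n j 0 = (stirling1 n (n - j) : ℂ) := by
  intro n
  induction n with
  | zero =>
    intro j hj
    interval_cases j
    simp [Vfun, stirling1]
  | succ n ih =>
    intro j hj
    match j with
    | 0 => rw [Vfun_zero_right]; simp [stirling1_self]
    | m+1 =>
      rw [Vfun_succ]
      rcases Nat.lt_or_ge m n with hm | hm
      · rw [ih (m+1) (by omega), ih m (by omega)]
        have h1 : n - m = (n - (m+1)) + 1 := by omega
        have h2 : n + 1 - (m+1) = (n - (m+1)) + 1 := by omega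
        rw [h2, h1]
        show _ = ((stirling1 n (n-(m+1)) - (n : ℤ) * stirling1 n ((n-(m+1)) + 1) : ℤ) : ℂ)
        push_cast
        ring
      · have hmn : m = n := by omega
        subst hmn
        rw [Vfun_eq_zero _ _ _ (by omega), ih m (le_refl m)]
        simp only [Nat.sub_self]
        show _ = ((-(m:ℤ) * stirling1 m 0 : ℤ) : ℂ)
        push_cast
        ring

lemma VA : ∀ n, ∀ j ≤ n, Vfun n j ((n : ℂ) - 1) = (-1 : ℂ)^j * (stirling1 n (n - j) : ℂ) := by
  intro n
  induction n with
  | zero =>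
    intro j hj
    interval_cases j
    simp [Vfun, stirling1]
  | succ n ih =>
    intro j hj
    match j with
    | 0 => rw [Vfun_zero_right]; simp [stirling1_self]
    | m+1 =>
      have hc : ((n+1 : ℕ) : ℂ) - 1 = (n : ℂ) := by push_cast; ring
      have hc2 : (n : ℂ) - 1 = ((n : ℕ) : ℂ) - 1 := by norm_num
      rw [Vfun_top, hc, hc2]
      rcases Nat.lt_or_ge m n with hm | hm
      · rw [ih (m+1) (by omega), ih m (by omega)]
        have h1 : n - m = (n - (m+1)) + 1 := by omega
        have h2 : n + 1 - (m+1) = (n - (m+1)) + 1 := by omega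
        rw [h2, h1]
        show _ = (-1:ℂ)^(m+1) * ((stirling1 n (n-(m+1)) - (n : ℤ) * stirling1 n ((n-(m+1)) + 1) : ℤ) : ℂ)
        push_cast
        ring
      · have hmn : m = n := by omega
        subst hmn
        rw [Vfun_eq_zero _ _ _ (by omega), ih m (le_refl m)]
        simp only [Nat.sub_self]
        show _ = (-1:ℂ)^(m+1) * ((-(m:ℤ) * stirling1 m 0 : ℤ) : ℂ)
        push_cast
        ring

lemma esum : ∀ m j, ∀ t : ℂ,
    ∑ A ∈ (Finset.range m).powersetCard j, ∏ a ∈ A, (t - (a : ℕ)) = Vfun m j t := by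
  intro m
  induction m with
  | zero =>
    intro j t
    match j with
    | 0 => simp [Vfun]
    | j+1 => rw [Finset.powersetCard_eq_empty.2 (by simp)]; simp [Vfun]
  | succ m ih =>
    intro j t
    match j with
    | 0 => simp [Vfun_zero_right]
    | j+1 =>
      rw [Finset.range_add_one, Finset.powersetCard_succ_insert (Finset.notMem_range_self),
        Finset.sum_union, Finset.sum_image, Vfun_succ, ← ih (j+1) t, ← ih j t]
      · congr 1
        rw [Finset.mul_sum]
        refine Finset.sum_congr rfl fun A hA => ?_
        have hmA : m ∉ A := fun h => Finset.notMem_range_self ((Finset.mem_powersetCard.1 hA).1 h)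
        rw [Finset.prod_insert hmA]
      · intro A hA B hB hAB
        have hmA : m ∉ A := fun h => Finset.notMem_range_self ((Finset.mem_powersetCard.1 hA).1 h)
        have hmB : m ∉ B := fun h => Finset.notMem_range_self ((Finset.mem_powersetCard.1 hB).1 h)
        rw [← Finset.erase_insert hmA, ← Finset.erase_insert hmB, hAB]
      · rw [Finset.disjoint_right]
        intro A hA hA'
        have h1 : m ∈ A := by
          simp only [Finset.mem_image] at hA
          obtain ⟨B, _, rfl⟩ := hA
          exact Finset.mem_insert_self m B
        exact Finset.notMem_range_self ((Finset.mem_powersetCard.1 hA').1 h1)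

lemma sizeUpTo_lt {n : ℕ} (c : Composition n) {a b : ℕ} (h : a < b) (hb : b ≤ c.length) :
    c.sizeUpTo a < c.sizeUpTo b :=
  lt_of_lt_of_le (c.sizeUpTo_strict_mono (by omega)) (c.monotone_sizeUpTo (by omega : a + 1 ≤ b))

def eComp (n : ℕ) : Composition n ≃ Finset (Fin (n-1)) :=
  (compositionEquiv n).trans (compositionAsSetEquiv n)

lemma mem_eComp {n : ℕ} {c : Composition n} {i : Fin (n-1)} :
    i ∈ eComp n c ↔ ∃ j : Fin (c.length + 1), c.sizeUpTo j = (i : ℕ) + 1 := by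
  simp only [eComp, Equiv.trans_apply, compositionAsSetEquiv, compositionEquiv, Equiv.coe_fn_mk,
    Set.mem_toFinset, Set.mem_setOf_eq]
  rw [c.toCompositionAsSet_boundaries]
  simp only [Composition.boundaries, Finset.mem_map, Finset.mem_univ, true_and,
    RelEmbedding.coe_toEmbedding, Composition.boundary, OrderEmbedding.coe_ofStrictMono,
    Fin.ext_iff]
  constructor
  · rintro ⟨j, hj⟩
    exact ⟨j, by omega⟩
  · rintro ⟨j, hj⟩
    exact ⟨j, by omega⟩

lemma sizeUpTo_injOn {n : ℕ} (c : Composition n) :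
    Set.InjOn (fun j => c.sizeUpTo (j+1) - 1) (Finset.range (c.length - 1)) := by
  intro a ha b hb hab
  simp only [Finset.coe_range, Set.mem_Iio] at ha hb
  simp only at hab
  by_contra hne
  rcases Nat.lt_or_ge a b with h | h
  · have h2 := sizeUpTo_lt c (show a+1 < b+1 by omega) (by omega)
    have h1 : c.sizeUpTo 0 < c.sizeUpTo (a+1) := sizeUpTo_lt c (by omega) (by omega)
    rw [c.sizeUpTo_zero] at h1
    omega
  · have h' : b < a := by omega
    have h2 := sizeUpTo_lt c (show b+1 < a+1 by omega) (by omega)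
    have h1 : c.sizeUpTo 0 < c.sizeUpTo (b+1) := sizeUpTo_lt c (by omega) (by omega)
    rw [c.sizeUpTo_zero] at h1
    omega

lemma eComp_map {n : ℕ} (c : Composition n) (hl : 1 ≤ c.length) :
    (eComp n c).map Fin.valEmbedding
      = Finset.image (fun j => c.sizeUpTo (j+1) - 1) (Finset.range (c.length - 1)) := by
  ext b
  simp only [Finset.mem_map, Fin.valEmbedding_apply, Finset.mem_image, Finset.mem_range]
  constructor
  · rintro ⟨i, hi, rfl⟩
    obtain ⟨j, hj⟩ := mem_eComp.1 hi
    have hi2 := i.2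
    have hj2 : (j : ℕ) < c.length + 1 := j.2
    have hj0 : (j : ℕ) ≠ 0 := by
      intro h
      rw [h, c.sizeUpTo_zero] at hj
      omega
    have hjlen : (j : ℕ) ≠ c.length := by
      intro h
      rw [h, c.sizeUpTo_length] at hj
      omega
    refine ⟨(j : ℕ) - 1, by omega, ?_⟩
    rw [show (j:ℕ) - 1 + 1 = (j:ℕ) by omega, hj]
    omega
  · rintro ⟨j, hj, rfl⟩
    have h1 : c.sizeUpTo 0 < c.sizeUpTo (j+1) := sizeUpTo_lt c (by omega) (by omega)
    rw [c.sizeUpTo_zero] at h1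
    have h2 : c.sizeUpTo (j+1) < c.sizeUpTo c.length := sizeUpTo_lt c (by omega) (le_refl _)
    rw [c.sizeUpTo_length] at h2
    refine ⟨⟨c.sizeUpTo (j+1) - 1, by omega⟩, ?_, rfl⟩
    rw [mem_eComp]
    refine ⟨⟨j+1, by omega⟩, ?_⟩
    simp only
    omega

lemma eComp_card {n : ℕ} (c : Composition n) (hl : 1 ≤ c.length) :
    (eComp n c).card = c.length - 1 := by
  rw [← Finset.card_map Fin.valEmbedding, eComp_map c hl,
    Finset.card_image_of_injOn (sizeUpTo_injOn c), Finset.card_range]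

lemma eComp_prod {n : ℕ} (c : Composition n) (hl : 1 ≤ c.length) (t : ℂ) :
    ∏ a ∈ eComp n c, (t - ((a : ℕ) : ℂ))
      = ∏ j ∈ Finset.range (c.length - 1), (t - (c.sizeUpTo (j+1) : ℂ) + 1) := by
  have hpm := Finset.prod_map (eComp n c) Fin.valEmbedding (fun b => t - (b:ℂ))
  simp only [Fin.valEmbedding_apply] at hpm
  rw [← hpm,
    eComp_map c hl,
    Finset.prod_image (fun a ha b hb => sizeUpTo_injOn c (by simpa using ha) (by simpa using hb))]
  refine Finset.prod_congr rfl fun j hj => ?_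
  simp only [Finset.mem_range] at hj
  have h1 : c.sizeUpTo 0 < c.sizeUpTo (j+1) := sizeUpTo_lt c (by omega) (by omega)
  rw [c.sizeUpTo_zero] at h1
  rw [Nat.cast_sub (by omega : 1 ≤ c.sizeUpTo (j+1))]
  push_cast
  ring

lemma pProd_eq {n : ℕ} (c : Composition n) (hl : 1 ≤ c.length) (t : ℂ) :
    pProd c.blocks t
      = (t - (n:ℂ) + 1) * ∏ j ∈ Finset.range (c.length - 1), (t - (c.sizeUpTo (j+1) : ℂ) + 1) := by
  unfold pProd
  rw [c.blocks_length]
  obtain ⟨m, hm⟩ : ∃ m, c.length = m + 1 := ⟨c.length - 1, by omega⟩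
  rw [hm, Finset.prod_range_succ, Nat.add_sub_cancel, mul_comm]
  congr 1
  · have hlast : (c.blocks.take (m+1)).sum = n := by
      have := c.sizeUpTo_length
      rw [hm] at this
      exact this
    rw [hlast]

lemma spoly_eq (n k : ℕ) (hn : 1 ≤ n) (hk : 1 ≤ k) (t : ℂ) :
    Spoly n k t = (t - (n:ℂ) + 1) * Vfun (n-1) (k-1) t := by
  have key : Spoly n k t
      = ∑ A ∈ Finset.univ.filter (fun A : Finset (Fin (n-1)) => A.card = k-1),
          (t - (n:ℂ) + 1) * ∏ a ∈ A, (t - ((a:ℕ):ℂ)) := by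
    unfold Spoly
    refine Finset.sum_bij (fun c _ => eComp n c) ?_ ?_ ?_ ?_
    · intro c hc
      simp only [Finset.mem_filter, Finset.mem_univ, true_and] at hc ⊢
      rw [eComp_card c (by omega), hc]
    · intro a ha b hb hab
      exact (eComp n).injective hab
    · intro A hA
      simp only [Finset.mem_filter, Finset.mem_univ, true_and] at hA
      refine ⟨(eComp n).symm A, ?_, (eComp n).apply_symm_apply A⟩
      simp only [Finset.mem_filter, Finset.mem_univ, true_and]
      have hlen : 1 ≤ ((eComp n).symm A).length :=
        Composition.length_pos_of_pos _ (by omega)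
      have hcard := eComp_card ((eComp n).symm A) hlen
      rw [(eComp n).apply_symm_apply] at hcard
      omega
    · intro c hc
      simp only [Finset.mem_filter, Finset.mem_univ, true_and] at hc
      have hlen : 1 ≤ c.length := by omega
      rw [pProd_eq c hlen t, eComp_prod c hlen t]
  rw [key, ← esum (n-1) (k-1) t, Finset.mul_sum]
  have h1 : Finset.univ.filter (fun A : Finset (Fin (n-1)) => A.card = k-1)
      = (Finset.univ : Finset (Fin (n-1))).powersetCard (k-1) := by
    ext A
    simp [Finset.mem_powersetCard, Finset.subset_univ]
  rw [h1]
  have h2 : (Finset.range (n-1)) = (Finset.univ : Finset (Fin (n-1))).map Fin.valEmbedding := by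
    rw [Fin.map_valEmbedding_univ, Nat.Iio_eq_range]
  rw [h2, Finset.powersetCard_map, Finset.sum_map]
  refine Finset.sum_congr rfl fun A hA => ?_
  congr 1
  rw [show (Finset.mapEmbedding Fin.valEmbedding).toEmbedding A = A.map Fin.valEmbedding from rfl,
    Finset.prod_map]
  simp [Fin.valEmbedding_apply]

theorem stmt19 (i k : ℕ) (hi : 2 ≤ i) (hk1 : 1 ≤ k) (hki : k ≤ i) :
    Spoly i k ((i : ℂ) - 2) = -((stirling1 (i - 1) (i - k)).natAbs : ℂ) ∧
    Spoly i k 0 = (1 - (i : ℂ)) * (stirling1 (i - 1) (i - k) : ℂ) := by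
  have hcast : ((i - 1 : ℕ) : ℂ) = (i : ℂ) - 1 := by
    rw [Nat.cast_sub (by omega : 1 ≤ i)]
    norm_num
  have he : (i - 1) - (k - 1) = i - k := by omega
  have hjn : k - 1 ≤ i - 1 := by omega
  constructor
  · rw [spoly_eq i k (by omega) hk1]
    have hc : ((i : ℂ) - 2) = ((i - 1 : ℕ) : ℂ) - 1 := by rw [hcast]; ring
    rw [hc, VA (i-1) (k-1) hjn, he]
    have hA : ((stirling1 (i-1) (i-k)).natAbs : ℂ)
        = (-1:ℂ)^((i-1)+(i-k)) * (stirling1 (i-1) (i-k) : ℂ) := by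
      have h := stirling1_natAbs (i-1) (i-k)
      have h2 := congrArg (fun z : ℤ => (z : ℂ)) h
      simp only [Int.cast_mul, Int.cast_pow, Int.cast_neg, Int.cast_one, Int.cast_natCast] at h2
      exact h2
    rw [hA]
    have hpar : (i-1)+(i-k) = (k-1) + 2*(i-k) := by omega
    rw [hpar, pow_add, pow_mul, hcast]
    norm_num
    ring
  · rw [spoly_eq i k (by omega) hk1, VB (i-1) (k-1) hjn, he]
    ring
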